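/- Let μ = (μ₁,…,μ_m) and λ = (λ₁,…,λ_n) be probability vectors, ω₁ and ω₂ two weight functions with respect to μ and λ, and x₁,…,xₙ positive real numbers. Then ∏_{j=1}^n xⱼ^{λⱼ} ≤ ∏_{i=1}^m [I(∑_{j=1}^n ω₁(i,j)λⱼxⱼ, ∑_{j=1}^n ω₂(i,j)λⱼxⱼ)]^{μᵢ} ≤ ∑_{j=1}^n λⱼxⱼ, where I is the identric mean. -/

import Mathlib

open Finset

/-- The identric mean: `I(a,b) = a` if `a = b`, and
`I(a,b) = (1/e)(b^b/a^a)^{1/(b-a)}` otherwise. -/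
noncomputable def identric (a b : ℝ) : ℝ :=
  if a = b then a else (Real.exp 1)⁻¹ * (b ^ b / a ^ a) ^ (b - a)⁻¹

open intervalIntegral in
lemma key_integral {a b : ℝ} (ha : 0 < a) (hab : a < b) :
    (b - a) / 2 * (Real.log a + Real.log b) ≤ b * Real.log b - a * Real.log a - b + a ∧
    b * Real.log b - a * Real.log a - b + a ≤ (b - a) * Real.log ((a + b) / 2) := by
  have hb : 0 < b := ha.trans hab
  have hba : 0 < b - a := by linarith
  have hc : 0 < (a + b) / 2 := by linarith
  have hlogint : IntervalIntegrable Real.log MeasureTheory.volume a b :=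
    intervalIntegrable_log (Set.notMem_uIcc_of_lt ha hb)
  have hlog : ∫ t in a..b, Real.log t = b * Real.log b - a * Real.log a - b + a :=
    integral_log
  constructor
  · have hpt : ∀ t ∈ Set.Icc a b,
        (b * Real.log a - a * Real.log b) / (b - a) + t * ((Real.log b - Real.log a) / (b - a))
          ≤ Real.log t := by
      intro t ht
      have h1 := strictConcaveOn_log_Ioi.concaveOn.2 (Set.mem_Ioi.2 ha) (Set.mem_Ioi.2 hb)
        (show (0:ℝ) ≤ (b - t) / (b - a) by have h:= ht.2; apply div_nonneg <;> linarith)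
        (show (0:ℝ) ≤ (t - a) / (b - a) by have h:= ht.1; apply div_nonneg <;> linarith)
        (show (b - t) / (b - a) + (t - a) / (b - a) = 1 by field_simp; ring)
      have ht' : ((b - t) / (b - a)) • a + ((t - a) / (b - a)) • b = t := by
        simp only [smul_eq_mul]; field_simp; ring
      rw [ht'] at h1
      refine le_trans (le_of_eq ?_) h1
      simp only [smul_eq_mul]; field_simp; ring
    have hint : ∫ t in a..b,
        ((b * Real.log a - a * Real.log b) / (b - a) + t * ((Real.log b - Real.log a) / (b - a)))
        = (b - a) / 2 * (Real.log a + Real.log b) := by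
      rw [integral_add intervalIntegrable_const (by apply Continuous.intervalIntegrable; continuity)]
      rw [integral_const, integral_mul_const, integral_id]
      simp only [smul_eq_mul]
      field_simp
      ring
    have := integral_mono_on hab.le
      (by apply Continuous.intervalIntegrable; continuity) hlogint hpt
    rw [hlog, hint] at this
    exact this
  · set c := (a + b) / 2 with hcdef
    have hpt : ∀ t ∈ Set.Icc a b, Real.log t ≤ (Real.log c - 1) + t * c⁻¹ := by
      intro t ht
      have htpos : 0 < t := lt_of_lt_of_le ha ht.1
      have h2 := Real.log_le_sub_one_of_pos (show 0 < t / c by positivity)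
      rw [Real.log_div htpos.ne' hc.ne', div_eq_mul_inv] at h2
      linarith
    have hint : ∫ t in a..b, ((Real.log c - 1) + t * c⁻¹)
        = (b - a) * Real.log c := by
      rw [integral_add intervalIntegrable_const (by apply Continuous.intervalIntegrable; continuity)]
      rw [integral_const, integral_mul_const, integral_id]
      simp only [smul_eq_mul, hcdef]
      field_simp
      ring
    have := integral_mono_on hab.le hlogint
      (by apply Continuous.intervalIntegrable; continuity) hpt
    rw [hlog, hint] at this
    exact this

lemma identric_pos {a b : ℝ} (ha : 0 < a) (hb : 0 < b) : 0 < identric a b := by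
  unfold identric
  split
  · exact ha
  · have h1 : 0 < b ^ b / a ^ a := div_pos (Real.rpow_pos_of_pos hb b) (Real.rpow_pos_of_pos ha a)
    positivity

lemma identric_comm {a b : ℝ} (ha : 0 < a) (hb : 0 < b) : identric a b = identric b a := by
  rcases eq_or_ne a b with h | h
  · rw [h]
  · unfold identric
    rw [if_neg h, if_neg (Ne.symm h)]
    congr 1
    have h1 : 0 < b ^ b / a ^ a := div_pos (Real.rpow_pos_of_pos hb b) (Real.rpow_pos_of_pos ha a)
    rw [show a ^ a / b ^ b = (b ^ b / a ^ a)⁻¹ from (inv_div _ _).symm,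
      Real.inv_rpow h1.le, ← Real.rpow_neg h1.le,
      show -(a - b)⁻¹ = (b - a)⁻¹ by rw [← neg_sub a b, inv_neg]]

lemma identric_log_bounds_lt {a b : ℝ} (ha : 0 < a) (hab : a < b) :
    (Real.log a + Real.log b) / 2 ≤ Real.log (identric a b) ∧
      Real.log (identric a b) ≤ Real.log ((a + b) / 2) := by
  have hb : 0 < b := ha.trans hab
  have hba : 0 < b - a := by linarith
  have hX : 0 < b ^ b / a ^ a := div_pos (Real.rpow_pos_of_pos hb b) (Real.rpow_pos_of_pos ha a)
  have hlogI : Real.log (identric a b)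
      = -1 + (b * Real.log b - a * Real.log a) / (b - a) := by
    unfold identric
    rw [if_neg hab.ne]
    rw [Real.log_mul (by positivity) (Real.rpow_pos_of_pos hX _).ne',
      Real.log_inv, Real.log_exp, Real.log_rpow hX,
      Real.log_div (Real.rpow_pos_of_pos hb b).ne' (Real.rpow_pos_of_pos ha a).ne',
      Real.log_rpow hb, Real.log_rpow ha]
    rw [inv_mul_eq_div]
  obtain ⟨h1, h2⟩ := key_integral ha hab
  have e1 : (b * Real.log b - a * Real.log a - b + a) / (b - a)
      = -1 + (b * Real.log b - a * Real.log a) / (b - a) := by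
    field_simp
    ring
  constructor
  · rw [hlogI, ← e1, le_div_iff₀ hba]
    have e2 : (Real.log a + Real.log b) / 2 * (b - a)
        = (b - a) / 2 * (Real.log a + Real.log b) := by ring
    linarith
  · rw [hlogI, ← e1, div_le_iff₀ hba]
    have e2 : Real.log ((a + b) / 2) * (b - a) = (b - a) * Real.log ((a + b) / 2) := by ring
    linarith

lemma identric_log_bounds {a b : ℝ} (ha : 0 < a) (hb : 0 < b) :
    (Real.log a + Real.log b) / 2 ≤ Real.log (identric a b) ∧
      Real.log (identric a b) ≤ Real.log ((a + b) / 2) := by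
  rcases lt_trichotomy a b with h | h | h
  · exact identric_log_bounds_lt ha h
  · subst h
    rw [show identric a a = a from if_pos rfl, show (a + a) / 2 = a by ring]
    constructor <;> simp [add_self_div_two]
  · have := identric_log_bounds_lt hb h
    rw [identric_comm ha hb]
    constructor
    · rw [add_comm]; exact this.1
    · rw [show (a + b) / 2 = (b + a) / 2 by ring]; exact this.2

lemma sum_swap_weight {m n : ℕ} (μ : Fin m → ℝ) (ω : Fin m → Fin n → ℝ)
    (lam c : Fin n → ℝ) (hωμ : ∀ j, ∑ i, ω i j * μ i = 1) :
    ∑ i, μ i * ∑ j, ω i j * lam j * c j = ∑ j, lam j * c j := by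
  calc ∑ i, μ i * ∑ j, ω i j * lam j * c j
      = ∑ i, ∑ j, μ i * (ω i j * lam j * c j) := by simp [Finset.mul_sum]
    _ = ∑ j, ∑ i, μ i * (ω i j * lam j * c j) := Finset.sum_comm
    _ = ∑ j, (∑ i, ω i j * μ i) * (lam j * c j) := by
        refine Finset.sum_congr rfl fun j _ => ?_
        rw [Finset.sum_mul]
        exact Finset.sum_congr rfl fun i _ => by ring
    _ = ∑ j, lam j * c j := by simp [hωμ]

/-- Refinement of the weighted AM–GM inequality via two weight functions and the
identric mean. -/
theorem weighted_agm_refinement_identric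
    {m n : ℕ} (μ : Fin m → ℝ) (lam : Fin n → ℝ)
    (hμ0 : ∀ i, 0 ≤ μ i) (hμ1 : ∑ i, μ i = 1)
    (hlam0 : ∀ j, 0 ≤ lam j) (hlam1 : ∑ j, lam j = 1)
    (ω₁ ω₂ : Fin m → Fin n → ℝ)
    (hω₁0 : ∀ i j, 0 ≤ ω₁ i j) (hω₁μ : ∀ j, ∑ i, ω₁ i j * μ i = 1)
    (hω₁lam : ∀ i, ∑ j, ω₁ i j * lam j = 1)
    (hω₂0 : ∀ i j, 0 ≤ ω₂ i j) (hω₂μ : ∀ j, ∑ i, ω₂ i j * μ i = 1)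
    (hω₂lam : ∀ i, ∑ j, ω₂ i j * lam j = 1)
    (x : Fin n → ℝ) (hx : ∀ j, 0 < x j) :
    (∏ j, x j ^ lam j) ≤
        ∏ i, (identric (∑ j, ω₁ i j * lam j * x j) (∑ j, ω₂ i j * lam j * x j)) ^ μ i ∧
      (∏ i, (identric (∑ j, ω₁ i j * lam j * x j) (∑ j, ω₂ i j * lam j * x j)) ^ μ i) ≤
        ∑ j, lam j * x j := by
  set S1 : Fin m → ℝ := fun i => ∑ j, ω₁ i j * lam j * x j with hS1def
  set S2 : Fin m → ℝ := fun i => ∑ j, ω₂ i j * lam j * x j with hS2def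
  -- positivity of the sums
  have hSpos : ∀ (ω : Fin m → Fin n → ℝ), (∀ i j, 0 ≤ ω i j) →
      (∀ i, ∑ j, ω i j * lam j = 1) → ∀ i, 0 < ∑ j, ω i j * lam j * x j := by
    intro ω hω0 hωlam i
    have hex : ∃ j, j ∈ Finset.univ ∧ 0 < ω i j * lam j * x j := by
      by_contra h
      push_neg at h
      have hz : ∑ j, ω i j * lam j = 0 := by
        refine Finset.sum_eq_zero fun j _ => ?_
        have h1 := h j (Finset.mem_univ j)
        have h2 : 0 ≤ ω i j * lam j := mul_nonneg (hω0 i j) (hlam0 j)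
        rcases h2.lt_or_eq with h3 | h3
        · exact absurd (mul_pos h3 (hx j)) (not_lt.2 h1)
        · exact h3.symm
      rw [hωlam i] at hz
      norm_num at hz
    exact Finset.sum_pos' (fun j _ => mul_nonneg (mul_nonneg (hω0 i j) (hlam0 j)) (hx j).le) hex
  have hS1pos : ∀ i, 0 < S1 i := hSpos ω₁ hω₁0 hω₁lam
  have hS2pos : ∀ i, 0 < S2 i := hSpos ω₂ hω₂0 hω₂lam
  have hIpos : ∀ i, 0 < identric (S1 i) (S2 i) := fun i => identric_pos (hS1pos i) (hS2pos i)
  -- Jensen for log at each i (lower bound)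
  have hJ : ∀ (ω : Fin m → Fin n → ℝ), (∀ i j, 0 ≤ ω i j) →
      (∀ i, ∑ j, ω i j * lam j = 1) → ∀ i,
      ∑ j, ω i j * lam j * Real.log (x j) ≤ Real.log (∑ j, ω i j * lam j * x j) := by
    intro ω hω0 hωlam i
    have hgm := Real.geom_mean_le_arith_mean_weighted Finset.univ
      (fun j => ω i j * lam j) x
      (fun j _ => mul_nonneg (hω0 i j) (hlam0 j)) (hωlam i) (fun j _ => (hx j).le)
    have hgm' : ∏ j, x j ^ (ω i j * lam j) ≤ ∑ j, ω i j * lam j * x j := by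
      refine hgm.trans_eq (Finset.sum_congr rfl fun j _ => by ring)
    have hppos : 0 < ∏ j, x j ^ (ω i j * lam j) :=
      Finset.prod_pos fun j _ => Real.rpow_pos_of_pos (hx j) _
    have := Real.log_le_log hppos hgm'
    rw [Real.log_prod (fun j _ => (Real.rpow_pos_of_pos (hx j) _).ne')] at this
    calc ∑ j, ω i j * lam j * Real.log (x j)
        = ∑ j, Real.log (x j ^ (ω i j * lam j)) := by
          refine Finset.sum_congr rfl fun j _ => ?_
          rw [Real.log_rpow (hx j)]
      _ ≤ _ := this
  constructor
  · -- lower bound, via logs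
    have hLpos : 0 < ∏ j, x j ^ lam j :=
      Finset.prod_pos fun j _ => Real.rpow_pos_of_pos (hx j) _
    have hRpos : 0 < ∏ i, identric (S1 i) (S2 i) ^ μ i :=
      Finset.prod_pos fun i _ => Real.rpow_pos_of_pos (hIpos i) _
    rw [← Real.log_le_log_iff hLpos hRpos]
    rw [Real.log_prod (fun j _ => (Real.rpow_pos_of_pos (hx j) _).ne'),
      Real.log_prod (fun i _ => (Real.rpow_pos_of_pos (hIpos i) _).ne')]
    simp only [Real.log_rpow (hx _), Real.log_rpow (hIpos _)]
    have hstep : ∀ i, μ i * (∑ j, ω₁ i j * lam j * Real.log (x j) / 2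
        + ∑ j, ω₂ i j * lam j * Real.log (x j) / 2)
        ≤ μ i * Real.log (identric (S1 i) (S2 i)) := by
      intro i
      refine mul_le_mul_of_nonneg_left ?_ (hμ0 i)
      have h1 := hJ ω₁ hω₁0 hω₁lam i
      have h2 := hJ ω₂ hω₂0 hω₂lam i
      have h3 := (identric_log_bounds (hS1pos i) (hS2pos i)).1
      have e1 : ∑ j, ω₁ i j * lam j * Real.log (x j) / 2
          = (∑ j, ω₁ i j * lam j * Real.log (x j)) / 2 := by
        rw [Finset.sum_div]
      have e2 : ∑ j, ω₂ i j * lam j * Real.log (x j) / 2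
          = (∑ j, ω₂ i j * lam j * Real.log (x j)) / 2 := by
        rw [Finset.sum_div]
      rw [e1, e2]
      linarith
    calc ∑ j, lam j * Real.log (x j)
        = ∑ i, μ i * (∑ j, ω₁ i j * lam j * Real.log (x j) / 2
            + ∑ j, ω₂ i j * lam j * Real.log (x j) / 2) := by
          have hA := sum_swap_weight μ ω₁ lam (fun j => Real.log (x j) / 2) hω₁μ
          have hB := sum_swap_weight μ ω₂ lam (fun j => Real.log (x j) / 2) hω₂μ
          simp only [mul_add, Finset.sum_add_distrib]
          simp only [show ∀ (i : Fin m) (j : Fin n) (ω : Fin m → Fin n → ℝ),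
            ω i j * lam j * Real.log (x j) / 2 = ω i j * lam j * (Real.log (x j) / 2)
            from fun i j ω => by ring] at *
          rw [hA, hB]
          rw [← Finset.sum_add_distrib]
          refine (Finset.sum_congr rfl fun j _ => ?_)
          ring
      _ ≤ ∑ i, μ i * Real.log (identric (S1 i) (S2 i)) := Finset.sum_le_sum fun i _ => hstep i
  · -- upper bound
    have hstep : ∀ i ∈ Finset.univ, identric (S1 i) (S2 i) ^ μ i
        ≤ ((S1 i + S2 i) / 2) ^ μ i := by
      intro i _
      refine Real.rpow_le_rpow (hIpos i).le ?_ (hμ0 i)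
      have h3 := (identric_log_bounds (hS1pos i) (hS2pos i)).2
      have hm : 0 < (S1 i + S2 i) / 2 := by have := hS1pos i; have := hS2pos i; linarith
      exact (Real.log_le_log_iff (hIpos i) hm).1 h3
    have h1 : (∏ i, identric (S1 i) (S2 i) ^ μ i) ≤ ∏ i, ((S1 i + S2 i) / 2) ^ μ i :=
      Finset.prod_le_prod (fun i _ => (Real.rpow_pos_of_pos (hIpos i) _).le) hstep
    have h2 := Real.geom_mean_le_arith_mean_weighted Finset.univ μ
      (fun i => (S1 i + S2 i) / 2) (fun i _ => hμ0 i) hμ1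
      (fun i _ => by have := hS1pos i; have := hS2pos i; positivity)
    have h3 : ∑ i, μ i * ((S1 i + S2 i) / 2) = ∑ j, lam j * x j := by
      have hA := sum_swap_weight μ ω₁ lam x hω₁μ
      have hB := sum_swap_weight μ ω₂ lam x hω₂μ
      have : ∑ i, μ i * ((S1 i + S2 i) / 2)
          = (∑ i, μ i * S1 i + ∑ i, μ i * S2 i) / 2 := by
        rw [← Finset.sum_add_distrib, Finset.sum_div]
        refine Finset.sum_congr rfl fun i _ => by ring
      rw [this, hS1def, hS2def]
      simp only [hA, hB]
      ring
    calc (∏ i, identric (S1 i) (S2 i) ^ μ i)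
        ≤ ∏ i, ((S1 i + S2 i) / 2) ^ μ i := h1
      _ ≤ ∑ i, μ i * ((S1 i + S2 i) / 2) := h2
      _ = ∑ j, lam j * x j := h3
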